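/- Every minimum dominating set D of the tree G_k contains exactly one vertex of {r, s} and, for each i with 1 ≤ i ≤ k, exactly two vertices of {y_i, x_i, w_i, v_i, u_i}. -/

import Mathlib

/-- A set `D` of vertices is a dominating set if every vertex either lies in `D`
or is adjacent to a vertex of `D`. -/
def IsDominatingSet {V : Type*} (G : SimpleGraph V) (D : Finset V) : Prop :=
  ∀ v : V, v ∈ D ∨ ∃ w ∈ D, G.Adj v w

/-- The domination number: the minimum size of a dominating set. -/
noncomputable def dominationNumber {V : Type*} [Fintype V] (G : SimpleGraph V) : ℕ :=
  sInf {n | ∃ D : Finset V, IsDominatingSet G D ∧ D.card = n}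

/-- The number of minimum dominating sets. -/
noncomputable def numMinDomSets {V : Type*} [Fintype V] (G : SimpleGraph V) : ℕ :=
  Set.ncard {D : Finset V | IsDominatingSet G D ∧ D.card = dominationNumber G}

/-- The tree `G_k`: vertices `r = inl 0`, `s = inl 1`, and for each `i : Fin k` a path
`y_i x_i w_i v_i u_i = inr (i, 0), …, inr (i, 4)`; edges `r s`, `s y_i`, and the path edges. -/
def Gk (k : ℕ) : SimpleGraph (Fin 2 ⊕ (Fin k × Fin 5)) :=
  SimpleGraph.fromRel (fun a b =>
    (a = Sum.inl 0 ∧ b = Sum.inl 1) ∨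
    (∃ i : Fin k, a = Sum.inl 1 ∧ b = Sum.inr (i, 0)) ∨
    (∃ (i : Fin k) (j : Fin 4), a = Sum.inr (i, j.castSucc) ∧ b = Sum.inr (i, j.succ)))

lemma adj_u {k} {i : Fin k} {w} (h : (Gk k).Adj (Sum.inr (i,4)) w) : w = Sum.inr (i,3) := by
  rw [Gk, SimpleGraph.fromRel_adj] at h
  obtain ⟨hne, h | h⟩ := h <;> rcases h with ⟨h1,h2⟩|⟨i',h1,h2⟩|⟨i',j,h1,h2⟩ <;> simp_all
  all_goals {
    rw [Fin.ext_iff]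
    first
      | have h' := congrArg Fin.val h1.2
      | have h' := congrArg Fin.val h2.2
    have := j.isLt
    simp [Fin.val_succ, Fin.coe_castSucc] at h' ⊢
    omega }

lemma adj_x {k} {i : Fin k} {w} (h : (Gk k).Adj (Sum.inr (i,1)) w) :
    w = Sum.inr (i,0) ∨ w = Sum.inr (i,2) := by
  rw [Gk, SimpleGraph.fromRel_adj] at h
  obtain ⟨hne, h | h⟩ := h <;> rcases h with ⟨h1,h2⟩|⟨i',h1,h2⟩|⟨i',j,h1,h2⟩ <;> simp_all
  · apply Fin.ext
    have h' := congrArg Fin.val h1.2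
    simp [Fin.val_succ, Fin.coe_castSucc] at h' ⊢
    omega
  · left; apply Fin.ext
    have h' := congrArg Fin.val h2.2
    simp [Fin.val_succ, Fin.coe_castSucc] at h' ⊢
    omega

lemma adj_r {k} {w} (h : (Gk k).Adj (Sum.inl 0 : Fin 2 ⊕ (Fin k × Fin 5)) w) : w = Sum.inl 1 := by
  rw [Gk, SimpleGraph.fromRel_adj] at h
  obtain ⟨hne, h | h⟩ := h <;> rcases h with ⟨h1,h2⟩|⟨i',h1,h2⟩|⟨i',j,h1,h2⟩ <;> simp_all


lemma adj_path {k} (i : Fin k) (a b : Fin 5) (hab : a.val + 1 = b.val) :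
    (Gk k).Adj (Sum.inr (i,a)) (Sum.inr (i,b)) := by
  rw [Gk, SimpleGraph.fromRel_adj]
  have ha4 : a.val < 4 := by omega
  refine ⟨fun h => ?_, Or.inl ?_⟩
  · rw [Sum.inr.injEq, Prod.mk.injEq] at h
    exact absurd (congrArg Fin.val h.2) (by omega)
  refine Or.inr (Or.inr ⟨i, ⟨a.val, ha4⟩, ?_, ?_⟩)
  · exact congrArg Sum.inr (congrArg (Prod.mk i) (Fin.ext (by simp [Fin.coe_castSucc])))
  · exact congrArg Sum.inr (congrArg (Prod.mk i) (Fin.ext (by simp [Fin.val_succ]; omega)))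

lemma adj_rs {k} : (Gk k).Adj (Sum.inl 0) (Sum.inl 1) := by
  rw [Gk, SimpleGraph.fromRel_adj]
  exact ⟨by simp [Fin.ext_iff], Or.inl (Or.inl ⟨rfl, rfl⟩)⟩

def D0 (k : ℕ) : Finset (Fin 2 ⊕ (Fin k × Fin 5)) :=
  insert (Sum.inl 1) ((Finset.univ.image fun i : Fin k => Sum.inr (i,(1:Fin 5))) ∪
    (Finset.univ.image fun i : Fin k => Sum.inr (i,(3:Fin 5))))

lemma D0_card (k : ℕ) : (D0 k).card = 2 * k + 1 := by
  rw [D0, Finset.card_insert_of_notMem (by simp)]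
  rw [Finset.card_union_of_disjoint]
  · rw [Finset.card_image_of_injective _ (by intro a b h; simpa using h),
      Finset.card_image_of_injective _ (by intro a b h; simpa using h)]
    simp; ring
  · rw [Finset.disjoint_left]
    intro a ha hb
    simp only [Finset.mem_image, Finset.mem_univ, true_and] at ha hb
    obtain ⟨i, rfl⟩ := ha
    obtain ⟨i', h⟩ := hb
    rw [Sum.inr.injEq, Prod.mk.injEq] at h
    exact absurd h.2 (by decide)

lemma D0_dom (k : ℕ) : IsDominatingSet (Gk k) (D0 k) := by
  intro v
  rcases v with v | ⟨i, j⟩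
  · rcases Fin.exists_fin_two.mp ⟨v, rfl⟩ with h
    fin_cases v
    · exact Or.inr ⟨Sum.inl 1, by simp [D0], adj_rs⟩
    · exact Or.inl (by simp [D0])
  · have h1 : Sum.inr (i, (1:Fin 5)) ∈ D0 k := by simp [D0]
    have h3 : Sum.inr (i, (3:Fin 5)) ∈ D0 k := by simp [D0]
    fin_cases j
    · exact Or.inr ⟨_, h1, adj_path i 0 1 rfl⟩
    · exact Or.inl h1
    · exact Or.inr ⟨_, h1, ((Gk k).adj_symm (adj_path i 1 2 rfl))⟩
    · exact Or.inl h3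
    · exact Or.inr ⟨_, h3, ((Gk k).adj_symm (adj_path i 3 4 rfl))⟩

lemma domNum_le (k : ℕ) : dominationNumber (Gk k) ≤ 2 * k + 1 :=
  Nat.sInf_le ⟨D0 k, D0_dom k, D0_card k⟩

/-- Every minimum dominating set of `G_k` contains exactly one vertex of `{r, s}`
and exactly two vertices of each path `{y_i, x_i, w_i, v_i, u_i}`. -/
theorem Gk_minDomSet_structure (k : ℕ) (D : Finset (Fin 2 ⊕ (Fin k × Fin 5)))
    (hD : IsDominatingSet (Gk k) D) (hcard : D.card = dominationNumber (Gk k)) :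
    (D.filter (fun a => a = Sum.inl 0 ∨ a = Sum.inl 1)).card = 1 ∧
    ∀ i : Fin k, (D.filter (fun a => ∃ j : Fin 5, a = Sum.inr (i, j))).card = 2 := by
  -- decompose D.card
  have hsplit : (D.filter (fun a => a = Sum.inl 0 ∨ a = Sum.inl 1)).card + (D.filter (fun a => ¬ (fun a => a = Sum.inl 0 ∨ a = Sum.inl 1) a)).card = D.card :=
    Finset.card_filter_add_card_filter_not _
  have hrest : D.filter (fun a => ¬ (fun a => a = Sum.inl 0 ∨ a = Sum.inl 1) a) =
      Finset.univ.biUnion (fun i : Fin k => D.filter (fun a => ∃ j : Fin 5, a = Sum.inr (i, j))) := by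
    ext a
    rcases a with v | ⟨i, j⟩
    · simp only [Finset.mem_filter, Finset.mem_biUnion, Finset.mem_univ, true_and, ]
      constructor
      · rintro ⟨-, hv⟩; exact absurd (by fin_cases v <;> simp) hv
      · rintro ⟨i, -, j, h⟩; exact absurd h (by simp)
    · simp only [Finset.mem_filter, Finset.mem_biUnion, Finset.mem_univ, true_and, ]
      constructor
      · rintro ⟨hmem, -⟩; exact ⟨i, hmem, j, rfl⟩
      · rintro ⟨i', hmem, j', h⟩
        obtain ⟨rfl, rfl⟩ := by simpa using h
        exact ⟨hmem, by simp⟩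
  have hdisj : ∀ i ∈ (Finset.univ : Finset (Fin k)), ∀ i' ∈ Finset.univ, i ≠ i' →
      Disjoint (D.filter (fun a => ∃ j : Fin 5, a = Sum.inr (i, j)))
        (D.filter (fun a => ∃ j : Fin 5, a = Sum.inr (i', j))) := by
    intro i _ i' _ hne
    rw [Finset.disjoint_left]
    rintro a ha hb
    simp only [Finset.mem_filter] at ha hb
    obtain ⟨-, j, rfl⟩ := ha
    obtain ⟨-, j', h⟩ := hb
    obtain ⟨h1, -⟩ := by simpa using h
    exact hne h1
  have hsum : (D.filter (fun a => a = Sum.inl 0 ∨ a = Sum.inl 1)).card +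
      (∑ i : Fin k, (D.filter (fun a => ∃ j : Fin 5, a = Sum.inr (i, j))).card) = D.card := by
    rw [← hsplit, hrest, Finset.card_biUnion hdisj]
  -- lower bound for the {r,s} part
  have h0 : 1 ≤ (D.filter (fun a => a = Sum.inl 0 ∨ a = Sum.inl 1)).card := by
    rw [Nat.one_le_iff_ne_zero, ne_eq, Finset.card_eq_zero, ← ne_eq,
      ← Finset.nonempty_iff_ne_empty]
    rcases hD (Sum.inl 0) with h | ⟨w, hw, hadj⟩
    · exact ⟨Sum.inl 0, Finset.mem_filter.mpr ⟨h, Or.inl rfl⟩⟩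
    · exact ⟨Sum.inl 1, Finset.mem_filter.mpr ⟨adj_r hadj ▸ hw, Or.inr rfl⟩⟩
  -- lower bound for each path part
  have h2 : ∀ i : Fin k, 2 ≤ (D.filter (fun a => ∃ j : Fin 5, a = Sum.inr (i, j))).card := by
    intro i
    have hu : ∃ j : Fin 5, 3 ≤ j.val ∧ Sum.inr (i, j) ∈ D := by
      rcases hD (Sum.inr (i,4)) with h | ⟨w, hw, hadj⟩
      · exact ⟨4, by decide, h⟩
      · exact ⟨3, by decide, adj_u hadj ▸ hw⟩
    have hx : ∃ j : Fin 5, j.val ≤ 2 ∧ Sum.inr (i, j) ∈ D := by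
      rcases hD (Sum.inr (i,1)) with h | ⟨w, hw, hadj⟩
      · exact ⟨1, by decide, h⟩
      · rcases adj_x hadj with h | h
        · exact ⟨0, by decide, h ▸ hw⟩
        · exact ⟨2, by decide, h ▸ hw⟩
    obtain ⟨j1, hj1, hm1⟩ := hu
    obtain ⟨j2, hj2, hm2⟩ := hx
    apply Finset.one_lt_card.mpr
    refine ⟨Sum.inr (i, j1), Finset.mem_filter.mpr ⟨hm1, j1, rfl⟩,
      Sum.inr (i, j2), Finset.mem_filter.mpr ⟨hm2, j2, rfl⟩, ?_⟩
    intro h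
    have hj : j1 = j2 := by simpa using h
    exact absurd (congrArg Fin.val hj) (by omega)
  -- total upper bound
  have hub : D.card ≤ 2 * k + 1 := hcard ▸ domNum_le k
  have hsumlb : 2 * k ≤ ∑ i : Fin k, (D.filter (fun a => ∃ j : Fin 5, a = Sum.inr (i, j))).card := by
    calc 2 * k = ∑ _i : Fin k, 2 := by simp [mul_comm]
    _ ≤ _ := Finset.sum_le_sum (fun i _ => h2 i)
  constructor
  · omega
  · intro i
    have he : (D.filter (fun a => ∃ j : Fin 5, a = Sum.inr (i, j))).card
        + ∑ i' ∈ Finset.univ.erase i, (D.filter (fun a => ∃ j : Fin 5, a = Sum.inr (i', j))).card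
        = ∑ i' : Fin k, (D.filter (fun a => ∃ j : Fin 5, a = Sum.inr (i', j))).card :=
      Finset.add_sum_erase Finset.univ
        (fun i : Fin k => (D.filter (fun a => ∃ j : Fin 5, a = Sum.inr (i, j))).card) (Finset.mem_univ i)
    have herase : 2 * (k - 1) ≤ ∑ i' ∈ Finset.univ.erase i,
        (D.filter (fun a => ∃ j : Fin 5, a = Sum.inr (i', j))).card := by
      calc 2 * (k - 1) = ∑ _i' ∈ Finset.univ.erase i, 2 := by
            simp [Finset.card_erase_of_mem, mul_comm]
      _ ≤ _ := Finset.sum_le_sum (fun i' _ => h2 i')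
    have hk : 1 ≤ k := Nat.one_le_iff_ne_zero.mpr (by rintro rfl; exact i.elim0)
    have := h2 i
    omega
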